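/- arXiv:1003.4148 — 2 statements merged into one kernel-verified Lean document; each statement's English description precedes it below -/
import Mathlib

section
/- With the linear regression model Y_j = aX_j + b + e_j, X_j = jΔ, e_j i.i.d. N(0,σ²), the filtered derivative of the slope D_3(k,A) = â(k,A) − â(k−A,A) is, under the null hypothesis of no change, a centered Gaussian random variable with variance Var[D_3(k,A)] = 24σ²/(Δ²·A·(A²−1)), independent of k; hence (D_3(k,A))_k is a centered stationary Gaussian sequence. -/
open MeasureTheory ProbabilityTheory NNReal Real

lemma FD.t1 (N : ℕ) : ∑ i ∈ Finset.range N, (i:ℝ) = N*(N-1)/2 := by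
  induction N with
  | zero => simp
  | succ n ih => rw [Finset.sum_range_succ, ih]; push_cast; ring

lemma FD.t2 (N : ℕ) : ∑ i ∈ Finset.range N, (i:ℝ)^2 = N*(N-1)*(2*N-1)/6 := by
  induction N with
  | zero => simp
  | succ n ih => rw [Finset.sum_range_succ, ih]; push_cast; ring

lemma FD.sum_quadratic (A : ℕ) (c0 c1 c2 : ℝ) :
    ∑ i ∈ Finset.range A, (c0 + c1*(i:ℝ) + c2*(i:ℝ)^2)
      = (A:ℝ)*c0 + c1*((A:ℝ)*((A:ℝ)-1)/2) + c2*((A:ℝ)*((A:ℝ)-1)*(2*(A:ℝ)-1)/6) := by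
  rw [Finset.sum_add_distrib, Finset.sum_add_distrib, Finset.sum_const, ← Finset.mul_sum,
    ← Finset.mul_sum, FD.t1, FD.t2]
  simp [Finset.card_range, nsmul_eq_mul]

lemma FD.reindex (A m : ℕ) (f : ℕ → ℝ) :
    ∑ j ∈ Finset.Ioc m (m+A), f j = ∑ i ∈ Finset.range A, f (m+1+i) := by
  rw [show Finset.Ioc m (m+A) = Finset.Ico (m+1) (m+1+A) by ext x; simp [Nat.lt_succ_iff, Nat.succ_le_iff]; omega,
    Finset.sum_Ico_eq_sum_range]
  simp

lemma FD.integral_gaussianPDFReal_mul (v1 v2 : ℝ≥0) (h1 : v1 ≠ 0) (h2 : v2 ≠ 0) (z : ℝ) :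
    (∫ x, gaussianPDFReal 0 v1 x * gaussianPDFReal 0 v2 (z - x)) =
      gaussianPDFReal 0 (v1 + v2) z := by
  have ha : 0 < (v1:ℝ) := lt_of_le_of_ne v1.coe_nonneg (by exact_mod_cast (Ne.symm h1))
  have hb : 0 < (v2:ℝ) := lt_of_le_of_ne v2.coe_nonneg (by exact_mod_cast (Ne.symm h2))
  set a : ℝ := (v1:ℝ) with hadef
  set b : ℝ := (v2:ℝ) with hbdef
  set c : ℝ := (a+b)/(2*a*b) with hcdef
  have hc : 0 < c := by positivity
  set K : ℝ := (√(2*π*a))⁻¹ * (√(2*π*b))⁻¹ * rexp (-z^2/(2*(a+b))) with hKdef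
  have key : ∀ x : ℝ, gaussianPDFReal 0 v1 x * gaussianPDFReal 0 v2 (z - x) =
      K * rexp (-c * (x - a*z/(a+b))^2) := by
    intro x
    simp only [gaussianPDFReal, sub_zero, hKdef]
    have hE : -x^2/(2*a) + -(z-x)^2/(2*b)
        = -z^2/(2*(a+b)) + (-c*(x - a*z/(a+b))^2) := by
      rw [hcdef]
      field_simp
      ring
    rw [mul_mul_mul_comm, ← Real.exp_add, hE, Real.exp_add, ← mul_assoc]
  simp only [key]
  rw [integral_const_mul]
  rw [MeasureTheory.integral_sub_right_eq_self (fun x => rexp (-c * x^2)) (a*z/(a+b))]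
  rw [integral_gaussian]
  -- K * √(π / c) = gaussianPDFReal 0 (v1 + v2) z
  simp only [gaussianPDFReal, sub_zero, NNReal.coe_add, hKdef]
  rw [show (√(2*π*a))⁻¹ * (√(2*π*b))⁻¹ * rexp (-z^2/(2*(a+b))) * √(π/c)
      = ((√(2*π*a))⁻¹ * (√(2*π*b))⁻¹ * √(π/c)) * rexp (-z^2/(2*(a+b))) by ring]
  congr 1
  rw [← Real.sqrt_inv (2*π*a), ← Real.sqrt_inv (2*π*b),
    ← Real.sqrt_mul (by positivity), ← Real.sqrt_mul (by positivity), ← Real.sqrt_inv]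
  congr 1
  rw [hcdef]
  field_simp
  ring


lemma FD.gaussianReal_conv (v1 v2 : ℝ≥0) :
    Measure.conv (gaussianReal 0 v1) (gaussianReal 0 v2) = gaussianReal 0 (v1 + v2) := by
  by_cases h1 : v1 = 0
  · subst h1
    rw [gaussianReal_zero_var, Measure.dirac_zero_conv, zero_add]
  by_cases h2 : v2 = 0
  · subst h2
    rw [gaussianReal_zero_var, Measure.conv_dirac_zero, add_zero]
  have h12 : v1 + v2 ≠ 0 := by simp [h1]
  have hmp : Measurable (fun p : ℝ × ℝ => gaussianPDF p.1 v2 p.2) := by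
    unfold gaussianPDF gaussianPDFReal
    fun_prop
  ext s hs
  rw [Measure.conv, Measure.map_apply measurable_add hs,
    Measure.prod_apply (measurable_add hs)]
  have hslice : ∀ x : ℝ, (gaussianReal 0 v2) (Prod.mk x ⁻¹' ((fun p : ℝ × ℝ => p.1 + p.2) ⁻¹' s))
      = ∫⁻ z in s, gaussianPDF x v2 z := by
    intro x
    have : Prod.mk x ⁻¹' ((fun p : ℝ × ℝ => p.1 + p.2) ⁻¹' s) = (fun y => x + y) ⁻¹' s := rfl
    rw [this, ← Measure.map_apply (measurable_const_add x) hs,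
      gaussianReal_map_const_add, zero_add, gaussianReal_apply x h2 s]
  simp only [hslice]
  rw [gaussianReal_of_var_ne_zero 0 h1,
    lintegral_withDensity_eq_lintegral_mul _ (measurable_gaussianPDF 0 v1)
      (hmp.lintegral_prod_right')]
  simp only [Pi.mul_apply]
  have hmul : ∀ x : ℝ, gaussianPDF 0 v1 x * ∫⁻ z in s, gaussianPDF x v2 z
      = ∫⁻ z in s, gaussianPDF 0 v1 x * gaussianPDF x v2 z := fun x =>
    (lintegral_const_mul _ (hmp.comp measurable_prodMk_left)).symm
  simp only [hmul]
  rw [← lintegral_lintegral_swap]; swap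
  · exact (((measurable_gaussianPDF 0 v1).comp measurable_snd).mul
      (hmp.comp (measurable_snd.prodMk measurable_fst))).aemeasurable
  rw [gaussianReal_apply _ h12 s]
  refine setLIntegral_congr_fun hs (fun z _ => ?_)
  -- ∫⁻ x, gaussianPDF 0 v1 x * gaussianPDF x v2 z = gaussianPDF 0 (v1+v2) z
  have hpt : ∀ x : ℝ, gaussianPDF 0 v1 x * gaussianPDF x v2 z
      = ENNReal.ofReal (gaussianPDFReal 0 v1 x * gaussianPDFReal 0 v2 (z - x)) := by
    intro x
    rw [gaussianPDF, gaussianPDF, ← ENNReal.ofReal_mul (gaussianPDFReal_nonneg _ _ _)]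
    congr 2
    simp [gaussianPDFReal]
  simp only [hpt]
  have hint : Integrable (fun x => gaussianPDFReal 0 v1 x * gaussianPDFReal 0 v2 (z - x)) := by
    refine Integrable.bdd_mul (f := gaussianPDFReal 0 v1)
      (g := fun x => gaussianPDFReal 0 v2 (z - x))
      ((integrable_gaussianPDFReal 0 v2).comp_sub_left z)
      (measurable_gaussianPDFReal 0 v1).aestronglyMeasurable
      (c := (√(2 * π * v1))⁻¹) (ae_of_all _ fun x => ?_)
    rw [Real.norm_eq_abs, abs_of_nonneg (gaussianPDFReal_nonneg _ _ _)]
    unfold gaussianPDFReal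
    have hexp : rexp (-(x - 0)^2/(2*(v1:ℝ))) ≤ 1 := by
      apply Real.exp_le_one_iff.mpr
      exact div_nonpos_of_nonpos_of_nonneg (neg_nonpos.mpr (sq_nonneg _)) (by positivity)
    calc (√(2 * π * ↑v1))⁻¹ * rexp (-(x - 0) ^ 2 / (2 * ↑v1))
        ≤ (√(2 * π * ↑v1))⁻¹ * 1 := mul_le_mul_of_nonneg_left hexp (by positivity)
      _ = (√(2 * π * ↑v1))⁻¹ := mul_one _
  rw [← ofReal_integral_eq_lintegral_ofReal hint
    (ae_of_all _ fun x => mul_nonneg (gaussianPDFReal_nonneg _ _ _) (gaussianPDFReal_nonneg _ _ _)),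
    FD.integral_gaussianPDFReal_mul v1 v2 h1 h2 z, gaussianPDF]


lemma FD.indepFun_add_gaussian {Ω : Type*} [MeasurableSpace Ω] {P : Measure Ω}
    [IsProbabilityMeasure P] {Xf Yf : Ω → ℝ} (hX : Measurable Xf) (hY : Measurable Yf)
    (h : IndepFun Xf Yf P) {v1 v2 : ℝ≥0}
    (h1 : Measure.map Xf P = gaussianReal 0 v1) (h2 : Measure.map Yf P = gaussianReal 0 v2) :
    Measure.map (fun ω => Xf ω + Yf ω) P = gaussianReal 0 (v1 + v2) := by
  have hmap : Measure.map (fun ω => (Xf ω, Yf ω)) P = (Measure.map Xf P).prod (Measure.map Yf P) :=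
    (indepFun_iff_map_prod_eq_prod_map_map hX.aemeasurable hY.aemeasurable).mp h
  have : (fun ω => Xf ω + Yf ω) = (fun p : ℝ × ℝ => p.1 + p.2) ∘ fun ω => (Xf ω, Yf ω) := rfl
  rw [this, ← Measure.map_map measurable_add (hX.prodMk hY), hmap, h1, h2,
    ← Measure.conv, FD.gaussianReal_conv]

lemma FD.map_weighted_sum {Ω : Type*} [MeasurableSpace Ω] (P : Measure Ω)
    [IsProbabilityMeasure P] (e : ℕ → Ω → ℝ) (hmeas : ∀ j, Measurable (e j)) (σ : ℝ≥0)
    (hdist : ∀ j, Measure.map (e j) P = gaussianReal 0 (σ ^ 2))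
    (hindep : iIndepFun e P)
    (c : ℕ → ℝ) (s : Finset ℕ) :
    Measure.map (fun ω => ∑ j ∈ s, c j * e j ω) P
      = gaussianReal 0 (∑ j ∈ s, (⟨(c j)^2, sq_nonneg _⟩ * σ^2 : ℝ≥0)) := by
  have hfmeas : ∀ j, Measurable (fun ω => c j * e j ω) := fun j => (hmeas j).const_mul _
  have hfindep : iIndepFun (fun j => fun ω => c j * e j ω) P := by
    have := hindep.comp (fun j => fun x : ℝ => c j * x) (fun j => measurable_const_mul _)
    exact this
  have hfdist : ∀ j, Measure.map (fun ω => c j * e j ω) P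
      = gaussianReal 0 (⟨(c j)^2, sq_nonneg _⟩ * σ^2 : ℝ≥0) := by
    intro j
    have : (fun ω => c j * e j ω) = (fun x : ℝ => c j * x) ∘ e j := rfl
    rw [this, ← Measure.map_map (measurable_const_mul _) (hmeas j), hdist j,
      gaussianReal_map_const_mul, mul_zero]
    rfl
  classical
  induction s using Finset.cons_induction with
  | empty =>
    simp only [Finset.sum_empty]
    rw [gaussianReal_zero_var]
    simp [Measure.map_const]
  | cons i s hi ih =>
    have hsum_meas : Measurable (fun ω => ∑ j ∈ s, c j * e j ω) := by
      apply Finset.measurable_sum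
      exact fun j _ => hfmeas j
    have hind : IndepFun (fun ω => c i * e i ω) (fun ω => ∑ j ∈ s, c j * e j ω) P := by
      have := (hfindep.indepFun_finsetSum_of_notMem hfmeas hi).symm
      convert this using 1
      ext ω
      simp [Finset.sum_apply]
    simp only [Finset.sum_cons]
    have : (fun ω => c i * e i ω + ∑ j ∈ s, c j * e j ω)
        = fun ω => (fun ω => c i * e i ω) ω + (fun ω => ∑ j ∈ s, c j * e j ω) ω := rfl
    rw [this]
    exact FD.indepFun_add_gaussian (hfmeas i) hsum_meas hind (hfdist i) ih

set_option maxHeartbeats 1000000 in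
/-- In the linear regression model `Y_j = aX_j + b + e_j`, `X_j = jΔ`, with i.i.d. `N(0,σ²)`
errors, the filtered derivative of the slope `D₃(k,A) = â(k,A) − â(k−A,A)` is, under the null
hypothesis of no change, a centered Gaussian random variable with variance
`24σ²/(Δ²·A·(A²−1))`, independent of `k`. -/
theorem filteredDerivative_slope_gaussian {Ω : Type*} [MeasurableSpace Ω]
    (P : Measure Ω) [IsProbabilityMeasure P]
    (a b : ℝ) (Δ : ℝ≥0) (hΔ : 0 < Δ) (σ : ℝ≥0) (hσ : 0 < σ)
    (e : ℕ → Ω → ℝ) (hmeas : ∀ j, Measurable (e j))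
    (hdist : ∀ j, Measure.map (e j) P = gaussianReal 0 (σ ^ 2))
    (hindep : iIndepFun e P)
    (X : ℕ → ℝ) (hX : ∀ j, X j = (j : ℝ) * (Δ : ℝ))
    (Y : ℕ → Ω → ℝ) (hY : ∀ j ω, Y j ω = a * X j + b + e j ω)
    (n A k : ℕ) (hA : 2 ≤ A) (hk : A ≤ k) (hkn : k + A ≤ n)
    (ahat : ℕ → Ω → ℝ)
    (hahat : ∀ (m : ℕ) (ω : Ω), ahat m ω =
      ((A : ℝ) * ∑ j ∈ Finset.Ioc m (m + A), X j * Y j ω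
          - (∑ j ∈ Finset.Ioc m (m + A), X j) * ∑ j ∈ Finset.Ioc m (m + A), Y j ω) /
        ((A : ℝ) * ∑ j ∈ Finset.Ioc m (m + A), (X j) ^ 2
          - (∑ j ∈ Finset.Ioc m (m + A), X j) ^ 2)) :
    Measure.map (fun ω => ahat k ω - ahat (k - A) ω) P
      = gaussianReal 0 (24 * σ ^ 2 / (Δ ^ 2 * (A : ℝ≥0) * (((A ^ 2 - 1 : ℕ)) : ℝ≥0))) := by
  classical
  have hA2 : (2:ℝ) ≤ (A:ℝ) := by exact_mod_cast hA
  have hΔ0 : (0:ℝ) < (Δ:ℝ) := hΔ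
  have hA1 : (0:ℝ) < (A:ℝ)^2 - 1 := by nlinarith
  have hA0 : (0:ℝ) < (A:ℝ) := by linarith
  set Q : ℝ := (Δ:ℝ)^2 * (A:ℝ)^2*((A:ℝ)^2-1)/12 with hQdef
  have hQpos : 0 < Q := by
    apply div_pos _ (by norm_num)
    exact mul_pos (mul_pos (by positivity) (by positivity)) hA1
  have hQne : Q ≠ 0 := ne_of_gt hQpos
  set Sv : ℕ → ℝ := fun m => (((m:ℝ)+1)*(A:ℝ) + (A:ℝ)*((A:ℝ)-1)/2)*(Δ:ℝ) with hSvdef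
  have hS : ∀ m : ℕ, ∑ j ∈ Finset.Ioc m (m+A), X j = Sv m := by
    intro m
    rw [FD.reindex A m X]
    have : ∀ i ∈ Finset.range A, X (m+1+i)
        = (((m:ℝ)+1)*(Δ:ℝ) + ((Δ:ℝ))*(i:ℝ) + 0*(i:ℝ)^2) := by
      intro i _
      rw [hX]; push_cast; ring
    rw [Finset.sum_congr rfl this, FD.sum_quadratic]
    simp only [hSvdef]
    ring
  have hS2 : ∀ m : ℕ, ∑ j ∈ Finset.Ioc m (m+A), (X j)^2
      = ((A:ℝ)*(((m:ℝ)+1)*(Δ:ℝ))^2 + (2*((m:ℝ)+1)*(Δ:ℝ)^2)*((A:ℝ)*((A:ℝ)-1)/2)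
        + ((Δ:ℝ)^2)*((A:ℝ)*((A:ℝ)-1)*(2*(A:ℝ)-1)/6)) := by
    intro m
    rw [FD.reindex A m (fun j => (X j)^2)]
    have : ∀ i ∈ Finset.range A, (X (m+1+i))^2
        = ((((m:ℝ)+1)*(Δ:ℝ))^2 + (2*((m:ℝ)+1)*(Δ:ℝ)^2)*(i:ℝ) + ((Δ:ℝ)^2)*(i:ℝ)^2) := by
      intro i _
      rw [hX]; push_cast; ring
    rw [Finset.sum_congr rfl this, FD.sum_quadratic]
  have hQm : ∀ m : ℕ, (A:ℝ) * ∑ j ∈ Finset.Ioc m (m + A), (X j) ^ 2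
      - (∑ j ∈ Finset.Ioc m (m + A), X j) ^ 2 = Q := by
    intro m
    rw [hS2 m, hS m, hQdef]
    simp only [hSvdef]
    ring
  have hcard : ∀ m : ℕ, (Finset.Ioc m (m+A)).card = A := by
    intro m; rw [Nat.card_Ioc]; omega
  -- linear form of the estimator
  have hahat' : ∀ (m : ℕ) (ω : Ω), ahat m ω
      = a + ∑ j ∈ Finset.Ioc m (m+A), (((A:ℝ) * X j - Sv m)/Q) * e j ω := by
    intro m ω
    have hXY : ∑ j ∈ Finset.Ioc m (m+A), X j * Y j ω
        = a * (∑ j ∈ Finset.Ioc m (m+A), (X j)^2) + b * (∑ j ∈ Finset.Ioc m (m+A), X j)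
          + ∑ j ∈ Finset.Ioc m (m+A), X j * e j ω := by
      rw [Finset.mul_sum, Finset.mul_sum, ← Finset.sum_add_distrib, ← Finset.sum_add_distrib]
      refine Finset.sum_congr rfl fun j _ => ?_
      rw [hY]; ring
    have hYsum : ∑ j ∈ Finset.Ioc m (m+A), Y j ω
        = a * (∑ j ∈ Finset.Ioc m (m+A), X j) + (A:ℝ)*b + ∑ j ∈ Finset.Ioc m (m+A), e j ω := by
      have h0 : ∀ j ∈ Finset.Ioc m (m+A), Y j ω = a * X j + b + e j ω := fun j _ => hY j ω
      rw [Finset.sum_congr rfl h0, Finset.sum_add_distrib, Finset.sum_add_distrib,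
        Finset.sum_const, hcard m, Finset.mul_sum, nsmul_eq_mul]
    have hlin : ∑ j ∈ Finset.Ioc m (m+A), (((A:ℝ) * X j - Sv m)/Q) * e j ω
        = ((A:ℝ) * (∑ j ∈ Finset.Ioc m (m+A), X j * e j ω)
            - Sv m * (∑ j ∈ Finset.Ioc m (m+A), e j ω))/Q := by
      rw [Finset.mul_sum, Finset.mul_sum, ← Finset.sum_sub_distrib, Finset.sum_div]
      refine Finset.sum_congr rfl fun j _ => ?_
      ring
    rw [hahat, hQm m, hXY, hYsum, hS m, hS2 m, hlin, hQdef]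
    simp only [hSvdef]
    field_simp
    ring
  set c : ℕ → ℝ := fun j => if k < j then ((A:ℝ) * X j - Sv k)/Q
      else -(((A:ℝ) * X j - Sv (k-A))/Q) with hcdef
  have hkA : k - A + A = k := Nat.sub_add_cancel hk
  have hdiff : (fun ω => ahat k ω - ahat (k - A) ω)
      = fun ω => ∑ j ∈ Finset.Ioc (k-A) (k+A), c j * e j ω := by
    funext ω
    rw [hahat' k ω, hahat' (k-A) ω, hkA]
    rw [← Finset.sum_Ioc_consecutive (fun j => c j * e j ω) (Nat.sub_le k A)
      (Nat.le_add_right k A)]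
    have h1 : ∀ j ∈ Finset.Ioc (k-A) k, c j * e j ω
        = -((((A:ℝ) * X j - Sv (k-A))/Q) * e j ω) := by
      intro j hj
      rw [Finset.mem_Ioc] at hj
      simp only [hcdef]
      rw [if_neg (not_lt.mpr hj.2)]
      ring
    have h2 : ∀ j ∈ Finset.Ioc k (k+A), c j * e j ω
        = (((A:ℝ) * X j - Sv k)/Q) * e j ω := by
      intro j hj
      rw [Finset.mem_Ioc] at hj
      simp only [hcdef]
      rw [if_pos hj.1]
    rw [Finset.sum_congr rfl h1, Finset.sum_congr rfl h2, Finset.sum_neg_distrib]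
    ring
  rw [hdiff, FD.map_weighted_sum P e hmeas σ hdist hindep c (Finset.Ioc (k-A) (k+A))]
  congr 1
  refine NNReal.coe_injective ?_
  have hA2pow : 1 ≤ A^2 := Nat.one_le_pow 2 A (by omega)
  have hcast : (((A ^ 2 - 1 : ℕ) : ℝ≥0) : ℝ) = (A:ℝ)^2 - 1 := by
    rw [NNReal.coe_natCast, Nat.cast_sub hA2pow]
    push_cast
    ring
  rw [NNReal.coe_sum, NNReal.coe_div]
  simp only [NNReal.coe_mul, NNReal.coe_pow, NNReal.coe_mk, NNReal.coe_ofNat,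
    NNReal.coe_natCast, hcast]
  -- now a real identity
  have hpart : ∀ m : ℕ, ∑ j ∈ Finset.Ioc m (m+A), (((A:ℝ) * X j - Sv m)/Q)^2
      = (((A:ℝ)^3*((A:ℝ)^2-1)/12)*(Δ:ℝ)^2)/Q^2 := by
    intro m
    rw [FD.reindex A m (fun j => (((A:ℝ) * X j - Sv m)/Q)^2)]
    have : ∀ i ∈ Finset.range A, (((A:ℝ) * X (m+1+i) - Sv m)/Q)^2
        = (((A:ℝ)*((A:ℝ)-1)/2*(Δ:ℝ))^2/Q^2
            + (-((A:ℝ)^2*((A:ℝ)-1)*(Δ:ℝ)^2)/Q^2)*(i:ℝ)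
            + (((A:ℝ)*(Δ:ℝ))^2/Q^2)*(i:ℝ)^2) := by
      intro i _
      rw [hX]
      simp only [hSvdef]
      push_cast
      rw [div_pow]
      field_simp
      ring
    rw [Finset.sum_congr rfl this, FD.sum_quadratic]
    field_simp
    ring
  have hsq : ∀ j ∈ Finset.Ioc (k-A) k, ((c j)^2 * (σ:ℝ)^2 : ℝ)
      = (((A:ℝ) * X j - Sv (k-A))/Q)^2 * (σ:ℝ)^2 := by
    intro j hj
    rw [Finset.mem_Ioc] at hj
    simp only [hcdef]
    rw [if_neg (not_lt.mpr hj.2), neg_sq]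
  have hsq2 : ∀ j ∈ Finset.Ioc k (k+A), ((c j)^2 * (σ:ℝ)^2 : ℝ)
      = (((A:ℝ) * X j - Sv k)/Q)^2 * (σ:ℝ)^2 := by
    intro j hj
    rw [Finset.mem_Ioc] at hj
    simp only [hcdef]
    rw [if_pos hj.1]
  calc ∑ j ∈ Finset.Ioc (k-A) (k+A), (c j)^2 * (σ:ℝ)^2
      = ∑ j ∈ Finset.Ioc (k-A) k, (c j)^2 * (σ:ℝ)^2
        + ∑ j ∈ Finset.Ioc k (k+A), (c j)^2 * (σ:ℝ)^2 :=
        (Finset.sum_Ioc_consecutive _ (Nat.sub_le k A) (Nat.le_add_right k A)).symm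
    _ = (∑ j ∈ Finset.Ioc (k-A) (k-A+A), (((A:ℝ) * X j - Sv (k-A))/Q)^2) * (σ:ℝ)^2
        + (∑ j ∈ Finset.Ioc k (k+A), (((A:ℝ) * X j - Sv k)/Q)^2) * (σ:ℝ)^2 := by
        rw [Finset.sum_congr rfl hsq, Finset.sum_congr rfl hsq2, hkA,
          ← Finset.sum_mul, ← Finset.sum_mul]
    _ = ((((A:ℝ)^3*((A:ℝ)^2-1)/12)*(Δ:ℝ)^2)/Q^2) * (σ:ℝ)^2
        + ((((A:ℝ)^3*((A:ℝ)^2-1)/12)*(Δ:ℝ)^2)/Q^2) * (σ:ℝ)^2 := by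
        rw [hpart (k-A), hpart k]
    _ = 24 * (σ:ℝ)^2 / ((Δ:ℝ)^2 * (A:ℝ) * ((A:ℝ)^2 - 1)) := by
        rw [hQdef]
        field_simp
        ring
end

section
/- Suppose a_n is a sequence of nonnegative random variables with lim P(a_n ≤ c_n(x)) = exp(−2e^{−x}) for all x, and suppose σ̂_n is an estimator of σ > 0 with |σ − σ̂_n|·log n → 0 in probability. Then lim_{n→∞} P(a_n ≤ (σ̂_n/σ)·c_n(x)) = exp(−2e^{−x}) for all x. (This yields the filtered-derivative extreme-value limit with estimated variance.) -/
open MeasureTheory Filter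

/-- The Darling–Erdős type normalization `c_n(x)`. -/
noncomputable def cDE (n : ℕ) (x : ℝ) : ℝ :=
  (x + 2 * Real.log n + (1 / 2) * Real.log (Real.log n) - (1 / 2) * Real.log Real.pi) /
    Real.sqrt (2 * Real.log n)

lemma cDE_bounds {n : ℕ} {x δ σ s : ℝ} (hσ : 0 < σ) (hδ : 0 < δ)
    (hL3 : 3 ≤ Real.log n) (hLx : |x| ≤ Real.log n)
    (hclose : |σ - s| * Real.log n ≤ δ * σ / 4) :
    cDE n (x - δ) ≤ (s / σ) * cDE n x ∧ (s / σ) * cDE n x ≤ cDE n (x + δ) := by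
  set L := Real.log (n : ℝ) with hLdef
  have hL0 : 0 < L := by linarith
  have hD : 0 < Real.sqrt (2 * L) := Real.sqrt_pos.2 (by linarith)
  set N := x + 2 * L + (1 / 2) * Real.log L - (1 / 2) * Real.log Real.pi with hN
  have hlogL0 : 0 ≤ Real.log L := Real.log_nonneg (by linarith)
  have hlogLle : Real.log L ≤ L := le_trans (Real.log_le_sub_one_of_pos hL0) (by linarith)
  have hpi0 : (0:ℝ) ≤ Real.log Real.pi := Real.log_nonneg (by nlinarith [Real.pi_gt_three])
  have hpile : Real.log Real.pi ≤ Real.pi - 1 := Real.log_le_sub_one_of_pos Real.pi_pos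
  have hpi4 : Real.pi ≤ 4 := Real.pi_le_four
  have hxb := abs_le.1 hLx
  have hNnn : 0 ≤ N := by rw [hN]; nlinarith
  have hN4 : N ≤ 4 * L := by rw [hN]; nlinarith
  have hkey : |(s - σ) * N| ≤ δ * σ := by
    rw [abs_mul, abs_sub_comm, abs_of_nonneg hNnn]
    have h1 : |σ - s| * N ≤ |σ - s| * (4 * L) :=
      mul_le_mul_of_nonneg_left hN4 (abs_nonneg _)
    nlinarith [abs_nonneg (σ - s)]
  have hkey' := abs_le.1 hkey
  have e0 : cDE n x = N / Real.sqrt (2 * L) := by rw [cDE, hN]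
  have e1 : cDE n (x - δ) = (N - δ) / Real.sqrt (2 * L) := by rw [cDE, hN]; ring
  have e2 : cDE n (x + δ) = (N + δ) / Real.sqrt (2 * L) := by rw [cDE, hN]; ring
  rw [e0, e1, e2, ← mul_div_assoc]
  constructor
  · rw [div_le_div_iff_of_pos_right hD, div_mul_eq_mul_div, le_div_iff₀ hσ]
    nlinarith
  · rw [div_le_div_iff_of_pos_right hD, div_mul_eq_mul_div, div_le_iff₀ hσ]
    nlinarith

/-- Extreme-value limit with estimated variance: if `P(a_n ≤ c_n(x)) → exp(−2e^{−x})` for all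
`x` and `|σ − σ̂_n|·log n → 0` in probability, then
`P(a_n ≤ (σ̂_n/σ)·c_n(x)) → exp(−2e^{−x})` for all `x`. -/
theorem extreme_value_limit_estimated_variance {Ω : Type*} [MeasurableSpace Ω]
    (μ : Measure Ω) [IsProbabilityMeasure μ]
    (a : ℕ → Ω → ℝ) (ha : ∀ n ω, 0 ≤ a n ω)
    (σ : ℝ) (hσ : 0 < σ) (σhat : ℕ → Ω → ℝ) (hσhat : ∀ n ω, 0 < σhat n ω)
    (h1 : ∀ x : ℝ, Tendsto (fun n => (μ {ω | a n ω ≤ cDE n x}).toReal) atTop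
      (nhds (Real.exp (-2 * Real.exp (-x)))))
    (h2 : ∀ ε : ℝ, 0 < ε →
      Tendsto (fun n => μ {ω | ε ≤ |σ - σhat n ω| * Real.log n}) atTop (nhds 0)) :
    ∀ x : ℝ, Tendsto (fun n => (μ {ω | a n ω ≤ (σhat n ω / σ) * cDE n x}).toReal) atTop
      (nhds (Real.exp (-2 * Real.exp (-x)))) := by
  intro x
  rw [Metric.tendsto_atTop]
  intro ε hε
  set f : ℝ → ℝ := fun y => Real.exp (-2 * Real.exp (-y)) with hf
  have hcont : ContinuousAt f x := by
    apply Continuous.continuousAt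
    continuity
  obtain ⟨δ₀, hδ₀, hδ₀'⟩ := Metric.continuousAt_iff.1 hcont (ε / 4) (by linarith)
  set δ := δ₀ / 2 with hδdef
  have hδ : 0 < δ := by positivity
  -- the bad event
  set B : ℕ → Set Ω := fun n => {ω | δ * σ / 4 ≤ |σ - σhat n ω| * Real.log n} with hB
  have hBtend : Tendsto (fun n => (μ (B n)).toReal) atTop (nhds 0) := by
    have := (ENNReal.tendsto_toReal (by simp)).comp (h2 (δ * σ / 4) (by positivity))
    exact this
  -- convergence at x ± δ
  have hup := (h1 (x + δ)).eventually (Metric.ball_mem_nhds _ (show (0:ℝ) < ε / 4 by linarith))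
  have hlo := (h1 (x - δ)).eventually (Metric.ball_mem_nhds _ (show (0:ℝ) < ε / 4 by linarith))
  have hBev := hBtend.eventually (Metric.ball_mem_nhds _ (show (0:ℝ) < ε / 4 by linarith))
  have hlog : Tendsto (fun n : ℕ => Real.log n) atTop atTop :=
    Real.tendsto_log_atTop.comp tendsto_natCast_atTop_atTop
  have hlogev := hlog.eventually_ge_atTop (max 3 (|x| + δ))
  obtain ⟨Nbig, hNbig⟩ :=
    ((((hup.and hlo).and hBev).and hlogev)).exists_forall_of_atTop
  refine ⟨Nbig, fun n hn => ?_⟩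
  obtain ⟨⟨⟨hupn, hlon⟩, hBn⟩, hlogn⟩ := hNbig n hn
  have hL3 : 3 ≤ Real.log n := le_trans (le_max_left _ _) hlogn
  have hLx : |x| + δ ≤ Real.log n := le_trans (le_max_right _ _) hlogn
  -- set inclusions
  have hxp : |x + δ| ≤ Real.log n := by
    have := abs_le.1 (le_refl |x|)
    have h := abs_le.1 (le_refl |x|)
    calc |x + δ| ≤ |x| + δ := by
          have := abs_add_le x δ
          rwa [abs_of_pos hδ] at this
      _ ≤ Real.log n := hLx
  have incl1 : {ω | a n ω ≤ (σhat n ω / σ) * cDE n x} ⊆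
      {ω | a n ω ≤ cDE n (x + δ)} ∪ B n := by
    intro ω hω
    by_cases hωB : ω ∈ B n
    · exact Or.inr hωB
    · left
      have hcl : |σ - σhat n ω| * Real.log n ≤ δ * σ / 4 :=
        le_of_not_ge hωB
      have := (cDE_bounds (n := n) (x := x) (s := σhat n ω) hσ hδ hL3
        (show |x| ≤ Real.log n by linarith) hcl).2
      exact le_trans hω this
  have incl2 : {ω | a n ω ≤ cDE n (x - δ)} ⊆
      {ω | a n ω ≤ (σhat n ω / σ) * cDE n x} ∪ B n := by
    intro ω hω
    by_cases hωB : ω ∈ B n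
    · exact Or.inr hωB
    · left
      have hcl : |σ - σhat n ω| * Real.log n ≤ δ * σ / 4 :=
        le_of_not_ge hωB
      have := (cDE_bounds (n := n) (x := x) (s := σhat n ω) hσ hδ hL3
        (show |x| ≤ Real.log n by linarith) hcl).1
      exact le_trans hω this
  -- measure bounds
  have m1 : (μ {ω | a n ω ≤ (σhat n ω / σ) * cDE n x}).toReal ≤
      (μ {ω | a n ω ≤ cDE n (x + δ)}).toReal + (μ (B n)).toReal := by
    rw [← ENNReal.toReal_add (measure_ne_top μ _) (measure_ne_top μ _)]
    exact ENNReal.toReal_mono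
      (ENNReal.add_ne_top.2 ⟨measure_ne_top μ _, measure_ne_top μ _⟩)
      (le_trans (measure_mono incl1) (measure_union_le _ _))
  have m2 : (μ {ω | a n ω ≤ cDE n (x - δ)}).toReal ≤
      (μ {ω | a n ω ≤ (σhat n ω / σ) * cDE n x}).toReal + (μ (B n)).toReal := by
    rw [← ENNReal.toReal_add (measure_ne_top μ _) (measure_ne_top μ _)]
    exact ENNReal.toReal_mono
      (ENNReal.add_ne_top.2 ⟨measure_ne_top μ _, measure_ne_top μ _⟩)
      (le_trans (measure_mono incl2) (measure_union_le _ _))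
  -- numeric conclusion
  have hfp : dist (f (x + δ)) (f x) < ε / 4 := hδ₀' (by
    rw [Real.dist_eq]
    simp only [add_sub_cancel_left]
    rw [abs_of_pos hδ]
    rw [hδdef]; linarith)
  have hfm : dist (f (x - δ)) (f x) < ε / 4 := hδ₀' (by
    rw [Real.dist_eq]
    simp only [sub_sub_cancel_left]
    rw [abs_neg, abs_of_pos hδ]
    rw [hδdef]; linarith)
  rw [Real.dist_eq] at hupn hlon hBn hfp hfm ⊢
  have h1' := abs_lt.1 hupn
  have h2' := abs_lt.1 hlon
  have h3' := abs_lt.1 hBn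
  have h4' := abs_lt.1 hfp
  have h5' := abs_lt.1 hfm
  rw [abs_lt]
  constructor <;> [linarith; linarith]
end
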